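/- arXiv:1104.3919 — 2 statements merged into one kernel-verified Lean document; each statement's English description precedes it below -/
import Mathlib

section
/- Let G be a finite simple graph whose vertex set is partitioned into three sets A1, A2, A3, each of which is a clique of G (that is, G is the complement of a 3-partite graph). If G has a triangle partition, then G has a triangle partition P such that for each i ∈ {1, 2, 3}, at most 14 vertices of Ai belong to triangles of P that are not entirely contained in a single one of the classes A1, A2, A3. -/
/-- A triangle in a simple graph: a set of three pairwise adjacent vertices. -/
def IsTriangle {V : Type*} (G : SimpleGraph V) (T : Finset V) : Prop :=
  T.card = 3 ∧ (T : Set V).Pairwise G.Adj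

/-- A triangle packing: a collection of pairwise vertex-disjoint triangles. -/
def IsTrianglePacking {V : Type*} (G : SimpleGraph V) (P : Finset (Finset V)) : Prop :=
  (∀ T ∈ P, IsTriangle G T) ∧
    (P : Set (Finset V)).Pairwise fun S T => Disjoint S T

/-- A triangle partition: a triangle packing covering every vertex. -/
def IsTrianglePartition {V : Type*} (G : SimpleGraph V) (P : Finset (Finset V)) : Prop :=
  IsTrianglePacking G P ∧ ∀ v : V, ∃ T ∈ P, v ∈ T

set_option maxHeartbeats 1000000


lemma align {V W : Type*} [DecidableEq V] (f : V → W) :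
    ∀ (l : List W) (s : Multiset V), s.map f = ↑l →
      ∃ m : List V, (↑m : Multiset V) = s ∧ m.map f = l := by
  intro l
  induction l with
  | nil =>
    intro s hs
    refine ⟨[], ?_, rfl⟩
    have : s.map f = 0 := by simpa using hs
    rw [Multiset.map_eq_zero] at this
    simp [this]
  | cons w l ih =>
    intro s hs
    have hw : w ∈ s.map f := by rw [hs]; simp
    obtain ⟨a, ha, hfa⟩ := Multiset.mem_map.mp hw
    have hs' : s = a ::ₘ s.erase a := (Multiset.cons_erase ha).symm
    have hmap : (s.erase a).map f = ↑l := by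
      have h2 := hs
      rw [hs', Multiset.map_cons, hfa, ← Multiset.cons_coe] at h2
      exact (Multiset.cons_inj_right w).mp h2
    obtain ⟨m, hm1, hm2⟩ := ih (s.erase a) hmap
    refine ⟨a :: m, ?_, by simp [hm2, hfa]⟩
    rw [← Multiset.cons_coe, hm1, ← hs']

lemma tri_rep {V W : Type*} [DecidableEq V] (f : V → W) (T : Finset V) (hT : T.card = 3)
    (x y z : W) (hp : T.val.map f = {x, y, z}) :
    ∃ a b c : V, a ≠ b ∧ a ≠ c ∧ b ≠ c ∧ T = {a,b,c} ∧ f a = x ∧ f b = y ∧ f c = z := by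
  obtain ⟨m, hm1, hm2⟩ := align f [x, y, z] T.val (by rw [hp]; rfl)
  have hlen : m.length = 3 := by
    have := congrArg Multiset.card hm1
    simpa [hT] using this
  match m, hlen, hm1, hm2 with
  | [a, b, c], _, hm1, hm2 =>
    have hnd : ([a,b,c] : List V).Nodup := by
      have h := T.nodup
      rw [← hm1] at h
      exact h
    simp only [List.nodup_cons, List.mem_cons, List.mem_singleton, List.not_mem_nil,
      List.nodup_nil, not_or, and_true] at hnd
    simp only [List.map_cons, List.map_nil, List.cons.injEq, and_true] at hm2
    have hab : a ≠ b := by tauto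
    have hac : a ≠ c := by tauto
    have hbc : b ≠ c := by tauto
    refine ⟨a, b, c, hab, hac, hbc, ?_, hm2.1, hm2.2.1, hm2.2.2⟩
    ext v
    rw [← Finset.mem_val, ← hm1]
    simp [Finset.mem_insert]

lemma nine {V : Type*} [DecidableEq V] {T1 T2 T3 : Finset V} {a1 a2 a3 b1 b2 b3 : V}
    (d12 : Disjoint T1 T2) (d13 : Disjoint T1 T3) (d23 : Disjoint T2 T3)
    (ha1 : a1 ∈ T1) (ha2 : a2 ∈ T2) (ha3 : a3 ∈ T3)
    (hb1 : b1 ∈ T1) (hb2 : b2 ∈ T2) (hb3 : b3 ∈ T3)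
    (n1 : a1 ≠ b1) (n2 : a2 ≠ b2) (n3 : a3 ≠ b3) :
    Disjoint ({a1,a2,a3} : Finset V) {b1,b2,b3} := by
  rw [Finset.disjoint_left]
  intro v hv1 hv2
  simp only [Finset.mem_insert, Finset.mem_singleton] at hv1 hv2
  rcases hv1 with rfl|rfl|rfl <;> rcases hv2 with h|h|h
  · exact n1 h
  · exact Finset.disjoint_left.mp d12 ha1 (h ▸ hb2)
  · exact Finset.disjoint_left.mp d13 ha1 (h ▸ hb3)
  · exact Finset.disjoint_left.mp d12 (h ▸ hb1) ha2
  · exact n2 h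
  · exact Finset.disjoint_left.mp d23 ha2 (h ▸ hb3)
  · exact Finset.disjoint_left.mp d13 (h ▸ hb1) ha3
  · exact Finset.disjoint_left.mp d23 (h ▸ hb2) ha3
  · exact n3 h

lemma swap_lemma {V W : Type*} [DecidableEq V] (G : SimpleGraph V)
    (A : W → Set V) (cl : V → W) (hcl : ∀ v, v ∈ A (cl v))
    (hclique : ∀ i, G.IsClique (A i))
    (P : Finset (Finset V)) (hP : IsTrianglePartition G P)
    (T1 T2 T3 : Finset V) (h1 : T1 ∈ P) (h2 : T2 ∈ P) (h3 : T3 ∈ P)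
    (h12 : T1 ≠ T2) (h13 : T1 ≠ T3) (h23 : T2 ≠ T3)
    (hp12 : T1.val.map cl = T2.val.map cl) (hp13 : T1.val.map cl = T3.val.map cl) :
    ∃ Q : Finset (Finset V), IsTrianglePartition G Q ∧
      ∀ U ∈ Q, (¬ ∃ j, ∀ v ∈ U, cl v = j) → U ∈ P ∧ U ≠ T1 ∧ U ≠ T2 ∧ U ≠ T3 := by
  obtain ⟨⟨htri, hdis⟩, hcov⟩ := hP
  have hc1 : T1.card = 3 := (htri T1 h1).1
  have hc2 : T2.card = 3 := (htri T2 h2).1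
  have hc3 : T3.card = 3 := (htri T3 h3).1
  have hpcard : Multiset.card (T1.val.map cl) = 3 := by
    rw [Multiset.card_map]; exact hc1
  obtain ⟨x, y, z, hxyz⟩ := Multiset.card_eq_three.mp hpcard
  obtain ⟨a1, b1, c1, nab1, nac1, nbc1, hrep1, hxa1, hyb1, hzc1⟩ :=
    tri_rep cl T1 hc1 x y z hxyz
  obtain ⟨a2, b2, c2, nab2, nac2, nbc2, hrep2, hxa2, hyb2, hzc2⟩ :=
    tri_rep cl T2 hc2 x y z (hp12 ▸ hxyz)
  obtain ⟨a3, b3, c3, nab3, nac3, nbc3, hrep3, hxa3, hyb3, hzc3⟩ :=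
    tri_rep cl T3 hc3 x y z (hp13 ▸ hxyz)
  have ha1 : a1 ∈ T1 := by rw [hrep1]; simp
  have hb1 : b1 ∈ T1 := by rw [hrep1]; simp
  have hc1' : c1 ∈ T1 := by rw [hrep1]; simp
  have ha2 : a2 ∈ T2 := by rw [hrep2]; simp
  have hb2 : b2 ∈ T2 := by rw [hrep2]; simp
  have hc2' : c2 ∈ T2 := by rw [hrep2]; simp
  have ha3 : a3 ∈ T3 := by rw [hrep3]; simp
  have hb3 : b3 ∈ T3 := by rw [hrep3]; simp
  have hc3' : c3 ∈ T3 := by rw [hrep3]; simp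
  have d12 : Disjoint T1 T2 := hdis (Finset.mem_coe.mpr h1) (Finset.mem_coe.mpr h2) h12
  have d13 : Disjoint T1 T3 := hdis (Finset.mem_coe.mpr h1) (Finset.mem_coe.mpr h3) h13
  have d23 : Disjoint T2 T3 := hdis (Finset.mem_coe.mpr h2) (Finset.mem_coe.mpr h3) h23
  set N1 : Finset V := {a1, a2, a3} with hN1
  set N2 : Finset V := {b1, b2, b3} with hN2
  set N3 : Finset V := {c1, c2, c3} with hN3
  -- monochromaticity
  have monoN1 : ∀ v ∈ N1, cl v = x := by
    intro v hv
    rw [hN1] at hv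
    simp only [Finset.mem_insert, Finset.mem_singleton] at hv
    rcases hv with rfl|rfl|rfl
    exacts [hxa1, hxa2, hxa3]
  have monoN2 : ∀ v ∈ N2, cl v = y := by
    intro v hv
    rw [hN2] at hv
    simp only [Finset.mem_insert, Finset.mem_singleton] at hv
    rcases hv with rfl|rfl|rfl
    exacts [hyb1, hyb2, hyb3]
  have monoN3 : ∀ v ∈ N3, cl v = z := by
    intro v hv
    rw [hN3] at hv
    simp only [Finset.mem_insert, Finset.mem_singleton] at hv
    rcases hv with rfl|rfl|rfl
    exacts [hzc1, hzc2, hzc3]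
  -- the N's are triangles
  have triN : ∀ (N : Finset V) (w : W), (∀ v ∈ N, cl v = w) → N.card = 3 → IsTriangle G N := by
    intro N w hmono hcard
    refine ⟨hcard, ?_⟩
    intro u hu v hv huv
    have hu' : u ∈ A w := by have := hmono u hu; rw [← this]; exact hcl u
    have hv' : v ∈ A w := by have := hmono v hv; rw [← this]; exact hcl v
    exact hclique w hu' hv' huv
  have cardN1 : N1.card = 3 :=
    Finset.card_eq_three.mpr ⟨a1, a2, a3,
      fun h => Finset.disjoint_left.mp d12 ha1 (h ▸ ha2),
      fun h => Finset.disjoint_left.mp d13 ha1 (h ▸ ha3),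
      fun h => Finset.disjoint_left.mp d23 ha2 (h ▸ ha3), rfl⟩
  have cardN2 : N2.card = 3 :=
    Finset.card_eq_three.mpr ⟨b1, b2, b3,
      fun h => Finset.disjoint_left.mp d12 hb1 (h ▸ hb2),
      fun h => Finset.disjoint_left.mp d13 hb1 (h ▸ hb3),
      fun h => Finset.disjoint_left.mp d23 hb2 (h ▸ hb3), rfl⟩
  have cardN3 : N3.card = 3 :=
    Finset.card_eq_three.mpr ⟨c1, c2, c3,
      fun h => Finset.disjoint_left.mp d12 hc1' (h ▸ hc2'),
      fun h => Finset.disjoint_left.mp d13 hc1' (h ▸ hc3'),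
      fun h => Finset.disjoint_left.mp d23 hc2' (h ▸ hc3'), rfl⟩
  have triN1 : IsTriangle G N1 := triN N1 x monoN1 cardN1
  have triN2 : IsTriangle G N2 := triN N2 y monoN2 cardN2
  have triN3 : IsTriangle G N3 := triN N3 z monoN3 cardN3
  -- pairwise disjointness of the N's
  have dN12 : Disjoint N1 N2 := nine d12 d13 d23 ha1 ha2 ha3 hb1 hb2 hb3 nab1 nab2 nab3
  have dN13 : Disjoint N1 N3 := nine d12 d13 d23 ha1 ha2 ha3 hc1' hc2' hc3' nac1 nac2 nac3
  have dN23 : Disjoint N2 N3 := nine d12 d13 d23 hb1 hb2 hb3 hc1' hc2' hc3' nbc1 nbc2 nbc3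
  -- old triangles are disjoint from the N's
  have dON : ∀ U ∈ P, U ≠ T1 → U ≠ T2 → U ≠ T3 → Disjoint U N1 ∧ Disjoint U N2 ∧ Disjoint U N3 := by
    intro U hU hU1 hU2 hU3
    have e1 : Disjoint U T1 := hdis (Finset.mem_coe.mpr hU) (Finset.mem_coe.mpr h1) hU1
    have e2 : Disjoint U T2 := hdis (Finset.mem_coe.mpr hU) (Finset.mem_coe.mpr h2) hU2
    have e3 : Disjoint U T3 := hdis (Finset.mem_coe.mpr hU) (Finset.mem_coe.mpr h3) hU3
    refine ⟨?_, ?_, ?_⟩ <;> (rw [Finset.disjoint_right]; intro v hv)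
    · rw [hN1] at hv
      simp only [Finset.mem_insert, Finset.mem_singleton] at hv
      rcases hv with rfl|rfl|rfl
      exacts [Finset.disjoint_right.mp e1 ha1, Finset.disjoint_right.mp e2 ha2,
        Finset.disjoint_right.mp e3 ha3]
    · rw [hN2] at hv
      simp only [Finset.mem_insert, Finset.mem_singleton] at hv
      rcases hv with rfl|rfl|rfl
      exacts [Finset.disjoint_right.mp e1 hb1, Finset.disjoint_right.mp e2 hb2,
        Finset.disjoint_right.mp e3 hb3]
    · rw [hN3] at hv
      simp only [Finset.mem_insert, Finset.mem_singleton] at hv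
      rcases hv with rfl|rfl|rfl
      exacts [Finset.disjoint_right.mp e1 hc1', Finset.disjoint_right.mp e2 hc2',
        Finset.disjoint_right.mp e3 hc3']
  -- the new partition
  refine ⟨insert N1 (insert N2 (insert N3 ((P \ {T1, T2, T3})))), ⟨⟨?_, ?_⟩, ?_⟩, ?_⟩
  · -- all triangles
    intro T hT
    simp only [Finset.mem_insert, Finset.mem_sdiff] at hT
    rcases hT with rfl|rfl|rfl|⟨hTP, -⟩
    exacts [triN1, triN2, triN3, htri T hTP]
  · -- pairwise disjoint
    intro S hS U hU hSU
    rw [Finset.mem_coe] at hS hU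
    simp only [Finset.mem_insert, Finset.mem_sdiff, Finset.mem_singleton] at hS hU
    have memP : ∀ {X : Finset V}, (X ∈ P ∧ ¬(X = T1 ∨ X = T2 ∨ X = T3)) →
        X ∈ P ∧ X ≠ T1 ∧ X ≠ T2 ∧ X ≠ T3 := by tauto
    rcases hS with rfl|rfl|rfl|hS' <;> rcases hU with rfl|rfl|rfl|hU'
    · exact absurd rfl hSU
    · exact dN12
    · exact dN13
    · obtain ⟨hU'', u1, u2, u3⟩ := memP (by simpa using hU')
      exact ((dON U hU'' u1 u2 u3).1).symm
    · exact dN12.symm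
    · exact absurd rfl hSU
    · exact dN23
    · obtain ⟨hU'', u1, u2, u3⟩ := memP (by simpa using hU')
      exact ((dON U hU'' u1 u2 u3).2.1).symm
    · exact dN13.symm
    · exact dN23.symm
    · exact absurd rfl hSU
    · obtain ⟨hU'', u1, u2, u3⟩ := memP (by simpa using hU')
      exact ((dON U hU'' u1 u2 u3).2.2).symm
    · obtain ⟨hS'', s1, s2, s3⟩ := memP (by simpa using hS')
      exact (dON S hS'' s1 s2 s3).1
    · obtain ⟨hS'', s1, s2, s3⟩ := memP (by simpa using hS')
      exact (dON S hS'' s1 s2 s3).2.1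
    · obtain ⟨hS'', s1, s2, s3⟩ := memP (by simpa using hS')
      exact (dON S hS'' s1 s2 s3).2.2
    · obtain ⟨hS'', -⟩ := memP (by simpa using hS')
      obtain ⟨hU'', -⟩ := memP (by simpa using hU')
      exact hdis (Finset.mem_coe.mpr hS'') (Finset.mem_coe.mpr hU'') hSU
  · -- coverage
    intro v
    obtain ⟨T, hTP, hvT⟩ := hcov v
    by_cases e1 : T = T1
    · subst e1
      rw [hrep1] at hvT
      simp only [Finset.mem_insert, Finset.mem_singleton] at hvT
      rcases hvT with rfl|rfl|rfl
      · exact ⟨N1, by simp, by rw [hN1]; simp⟩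
      · exact ⟨N2, by simp, by rw [hN2]; simp⟩
      · exact ⟨N3, by simp, by rw [hN3]; simp⟩
    by_cases e2 : T = T2
    · subst e2
      rw [hrep2] at hvT
      simp only [Finset.mem_insert, Finset.mem_singleton] at hvT
      rcases hvT with rfl|rfl|rfl
      · exact ⟨N1, by simp, by rw [hN1]; simp⟩
      · exact ⟨N2, by simp, by rw [hN2]; simp⟩
      · exact ⟨N3, by simp, by rw [hN3]; simp⟩
    by_cases e3 : T = T3
    · subst e3
      rw [hrep3] at hvT
      simp only [Finset.mem_insert, Finset.mem_singleton] at hvT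
      rcases hvT with rfl|rfl|rfl
      · exact ⟨N1, by simp, by rw [hN1]; simp⟩
      · exact ⟨N2, by simp, by rw [hN2]; simp⟩
      · exact ⟨N3, by simp, by rw [hN3]; simp⟩
    · exact ⟨T, by simp [hTP, e1, e2, e3], hvT⟩
  · -- cross triangles of Q lie in P minus the three
    intro U hU hcross
    simp only [Finset.mem_insert, Finset.mem_sdiff, Finset.mem_singleton] at hU
    rcases hU with rfl|rfl|rfl|⟨hUP, hU'⟩
    · exact absurd ⟨x, monoN1⟩ hcross
    · exact absurd ⟨y, monoN2⟩ hcross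
    · exact absurd ⟨z, monoN3⟩ hcross
    · simp only [Finset.mem_insert, Finset.mem_singleton, not_or] at hU'
      exact ⟨hUP, hU'.1, hU'.2.1, hU'.2.2⟩


/-- Let `G` be the complement of a 3-partite graph: its vertex set is
partitioned into three cliques `A 0, A 1, A 2`. If `G` has a triangle partition, then it
has a triangle partition `P` such that for each `i`, at most 14 vertices of `A i` belong
to triangles of `P` that are not entirely contained in a single class. -/
theorem stmt13 {V : Type*} [Fintype V] (G : SimpleGraph V) (A : Fin 3 → Set V)
    (hdisj : ∀ i j, i ≠ j → Disjoint (A i) (A j))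
    (hunion : A 0 ∪ A 1 ∪ A 2 = Set.univ)
    (hclique : ∀ i, G.IsClique (A i))
    (hpart : ∃ P : Finset (Finset V), IsTrianglePartition G P) :
    ∃ P : Finset (Finset V), IsTrianglePartition G P ∧
      ∀ i : Fin 3,
        {v | v ∈ A i ∧ ∃ T ∈ P, v ∈ T ∧ ¬∃ j : Fin 3, (T : Set V) ⊆ A j}.ncard ≤ 14 := by
  classical
  have hex : ∀ v : V, ∃ i, v ∈ A i := by
    intro v
    have hv : v ∈ A 0 ∪ A 1 ∪ A 2 := by rw [hunion]; trivial
    rcases hv with (h | h) | h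
    exacts [⟨0, h⟩, ⟨1, h⟩, ⟨2, h⟩]
  choose cl hcl using hex
  have hmem : ∀ v j, v ∈ A j → cl v = j := by
    intro v j hj
    by_contra hne
    exact Set.disjoint_left.mp (hdisj (cl v) j hne) (hcl v) hj
  set cross : Finset V → Prop := fun T => ¬ ∃ j, ∀ v ∈ T, cl v = j with hcrossdef
  have hcrossiff : ∀ T : Finset V, (¬∃ j : Fin 3, (T : Set V) ⊆ A j) ↔ cross T := by
    intro T
    rw [hcrossdef]
    apply not_congr
    apply exists_congr
    intro j
    constructor
    · intro h v hv
      exact hmem v j (h hv)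
    · intro h v hv
      have := h v hv
      rw [← this]
      exact hcl v
  set S : Finset (Finset (Finset V)) :=
    Finset.univ.filter (fun P : Finset (Finset V) => IsTrianglePartition G P) with hSdef
  have hSne : S.Nonempty := by
    obtain ⟨P0, hP0⟩ := hpart
    exact ⟨P0, by simp [hSdef, hP0]⟩
  obtain ⟨P, hPS, hmin⟩ := Finset.exists_min_image S (fun P => (P.filter cross).card) hSne
  have hPpart : IsTrianglePartition G P := by
    have := hPS
    rw [hSdef, Finset.mem_filter] at this
    exact this.2
  refine ⟨P, hPpart, ?_⟩
  -- fiber bound: at most 2 cross triangles with any given profile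
  have hfib : ∀ p : Multiset (Fin 3),
      ((P.filter cross).filter (fun T => T.val.map cl = p)).card ≤ 2 := by
    intro p
    by_contra hcon
    push_neg at hcon
    obtain ⟨t, hts, htc⟩ := Finset.exists_subset_card_eq hcon
    obtain ⟨T1, T2, T3, n12, n13, n23, rfl⟩ := Finset.card_eq_three.mp htc
    have m1 := hts (show T1 ∈ ({T1, T2, T3} : Finset (Finset V)) by simp)
    have m2 := hts (show T2 ∈ ({T1, T2, T3} : Finset (Finset V)) by simp)
    have m3 := hts (show T3 ∈ ({T1, T2, T3} : Finset (Finset V)) by simp)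
    simp only [Finset.mem_filter] at m1 m2 m3
    obtain ⟨Q, hQpart, hQcross⟩ := swap_lemma G A cl hcl hclique P hPpart T1 T2 T3
      m1.1.1 m2.1.1 m3.1.1 n12 n13 n23 (m1.2.trans m2.2.symm) (m1.2.trans m3.2.symm)
    have hsub : Q.filter cross ⊆ (P.filter cross) \ {T1, T2, T3} := by
      intro U hU
      rw [Finset.mem_filter] at hU
      obtain ⟨hUP, u1, u2, u3⟩ := hQcross U hU.1 hU.2
      rw [Finset.mem_sdiff]
      exact ⟨Finset.mem_filter.mpr ⟨hUP, hU.2⟩, by simp [u1, u2, u3]⟩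
    have hss : (P.filter cross) \ {T1, T2, T3} ⊂ P.filter cross := by
      refine Finset.sdiff_ssubset ?_ (by simp)
      intro U hU
      simp only [Finset.mem_insert, Finset.mem_singleton] at hU
      rcases hU with rfl | rfl | rfl
      exacts [Finset.mem_filter.mpr m1.1, Finset.mem_filter.mpr m2.1, Finset.mem_filter.mpr m3.1]
    have hlt : (Q.filter cross).card < (P.filter cross).card :=
      lt_of_le_of_lt (Finset.card_le_card hsub) (Finset.card_lt_card hss)
    have hQS : Q ∈ S := by simp [hSdef, hQpart]
    exact absurd (hmin Q hQS) (not_le.mpr hlt)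
  -- the counting
  intro i
  set crossP := P.filter cross with hcrossP
  set prof : Finset V → Multiset (Fin 3) := fun T => T.val.map cl with hprof
  set NC : Finset (Multiset (Fin 3)) :=
    {({0,0,1} : Multiset (Fin 3)), {0,0,2}, {0,1,1}, {0,2,2}, {1,1,2}, {1,2,2}, {0,1,2}}
    with hNCdef
  have keyNC : ∀ x y z : Fin 3,
      ¬(∃ j, ({x, y, z} : Multiset (Fin 3)) = Multiset.replicate 3 j) →
      ({x, y, z} : Multiset (Fin 3)) ∈ NC := by decide
  have hNC7 : ∀ i : Fin 3, (∑ p ∈ NC, Multiset.count i p) = 7 := by decide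
  set bigF : Finset V := crossP.biUnion (fun T => T.filter (fun v => cl v = i)) with hbigF
  have hsubset : {v | v ∈ A i ∧ ∃ T ∈ P, v ∈ T ∧ ¬∃ j : Fin 3, (T : Set V) ⊆ A j} ⊆ ↑bigF := by
    rintro v ⟨hvA, T, hTP, hvT, hTcr⟩
    rw [hbigF, Finset.coe_biUnion]
    refine Set.mem_iUnion₂.mpr ⟨T, ?_, ?_⟩
    · rw [hcrossP, Finset.mem_coe, Finset.mem_filter]
      exact ⟨hTP, (hcrossiff T).mp hTcr⟩
    · rw [Finset.mem_coe, Finset.mem_filter]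
      exact ⟨hvT, hmem v i hvA⟩
  have hcount : ∀ T : Finset V, (T.filter (fun v => cl v = i)).card = Multiset.count i (prof T) := by
    intro T
    rw [hprof]
    rw [Multiset.count_map]
    rw [Finset.card, Finset.filter_val]
    congr 1
    apply Multiset.filter_congr
    intro v _
    exact eq_comm
  calc {v | v ∈ A i ∧ ∃ T ∈ P, v ∈ T ∧ ¬∃ j : Fin 3, (T : Set V) ⊆ A j}.ncard
      ≤ (↑bigF : Set V).ncard := Set.ncard_le_ncard hsubset bigF.finite_toSet
    _ = bigF.card := Set.ncard_coe_finset bigF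
    _ ≤ ∑ T ∈ crossP, (T.filter (fun v => cl v = i)).card := Finset.card_biUnion_le
    _ = ∑ T ∈ crossP, Multiset.count i (prof T) :=
        Finset.sum_congr rfl (fun T _ => hcount T)
    _ = ∑ p ∈ crossP.image prof,
          (crossP.filter (fun T => prof T = p)).card • Multiset.count i p :=
        Finset.sum_comp (fun p => Multiset.count i p) prof
    _ ≤ ∑ p ∈ crossP.image prof, 2 * Multiset.count i p := by
        apply Finset.sum_le_sum
        intro p hp
        rw [smul_eq_mul]
        exact Nat.mul_le_mul_right _ (hfib p)
    _ ≤ ∑ p ∈ NC, 2 * Multiset.count i p := by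
        apply Finset.sum_le_sum_of_subset
        intro p hp
        rw [Finset.mem_image] at hp
        obtain ⟨T, hT, rfl⟩ := hp
        rw [hcrossP, Finset.mem_filter] at hT
        have hcard : Multiset.card (prof T) = 3 := by
          rw [hprof]
          simp only [Multiset.card_map]
          exact ((hPpart.1.1 T hT.1).1)
        obtain ⟨x, y, z, hxyz⟩ := Multiset.card_eq_three.mp hcard
        rw [hxyz]
        apply keyNC
        rintro ⟨j, hj⟩
        apply hT.2
        refine ⟨j, fun v hv => ?_⟩
        have : cl v ∈ prof T := by
          rw [hprof]
          exact Multiset.mem_map_of_mem cl (Finset.mem_val.mpr hv)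
        rw [hxyz, hj] at this
        exact Multiset.eq_of_mem_replicate this
    _ = 2 * ∑ p ∈ NC, Multiset.count i p := by rw [Finset.mul_sum]
    _ = 14 := by rw [hNC7 i]
end

section
/- Let k be a natural number and let G be a finite simple graph whose vertex set is partitioned into k sets A1, …, Ak, each of which is a clique of G (that is, G is the complement of a k-partite graph). If G has a triangle partition, then G has a triangle partition P in which the number of triangles not entirely contained in a single one of the classes A1, …, Ak is at most 14·k³. -/
lemma monoPartition {V : Type*} [DecidableEq V] {k : ℕ} (G : SimpleGraph V) (A : Fin k → Set V)
    (hclique : ∀ i, G.IsClique (A i)) (cl : V → Fin k) (hclmem : ∀ v, v ∈ A (cl v))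
    [∀ j, DecidablePred fun v : V => cl v = j] :
    ∀ (n : ℕ) (s : Finset V), s.card = n →
      (∀ i, 3 ∣ (s.filter (fun v => cl v = i)).card) →
      ∃ Q : Finset (Finset V),
        (∀ T ∈ Q, IsTriangle G T ∧ ∃ i, (T : Set V) ⊆ A i) ∧
        (Q : Set (Finset V)).Pairwise (fun S T => Disjoint S T) ∧
        Q.biUnion id = s := by
  intro n
  induction n using Nat.strong_induction_on with
  | _ n ih =>
  intro s hcard hdvd
  rcases s.eq_empty_or_nonempty with rfl | ⟨v, hv⟩
  · exact ⟨∅, by simp, by simp, by simp⟩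
  · set i := cl v with hi
    have hvf : v ∈ s.filter (fun w => cl w = i) := Finset.mem_filter.mpr ⟨hv, rfl⟩
    have h3 : 3 ≤ (s.filter (fun w => cl w = i)).card :=
      Nat.le_of_dvd (Finset.card_pos.mpr ⟨v, hvf⟩) (hdvd i)
    obtain ⟨t, hts, htc⟩ := Finset.exists_subset_card_eq h3
    have ht_s : t ⊆ s := hts.trans (Finset.filter_subset _ _)
    have htcl : ∀ w ∈ t, cl w = i := fun w hw => (Finset.mem_filter.mp (hts hw)).2
    have htA : (t : Set V) ⊆ A i := by
      intro w hw
      have hw' : w ∈ t := hw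
      rw [← htcl w hw']
      exact hclmem w
    have htri : IsTriangle G t := ⟨htc, fun x hx y hy hxy => hclique i (htA hx) (htA hy) hxy⟩
    have hn3 : 3 ≤ n := hcard ▸ (htc ▸ Finset.card_le_card ht_s)
    have hdvd' : ∀ j, 3 ∣ ((s \ t).filter (fun w => cl w = j)).card := by
      intro j
      by_cases hji : j = i
      · rw [hji]
        have he : (s \ t).filter (fun w => cl w = i) = (s.filter (fun w => cl w = i)) \ t := by
          ext w
          simp only [Finset.mem_filter, Finset.mem_sdiff]
          tauto
        rw [he, Finset.card_sdiff_of_subset hts, htc]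
        exact Nat.dvd_sub (hdvd i) dvd_rfl
      · have he : (s \ t).filter (fun w => cl w = j) = s.filter (fun w => cl w = j) := by
          ext w
          simp only [Finset.mem_filter, Finset.mem_sdiff]
          refine ⟨fun h => ⟨h.1.1, h.2⟩, fun h => ⟨⟨h.1, fun hwt => hji ?_⟩, h.2⟩⟩
          exact h.2.symm.trans (htcl w hwt)
        rw [he]; exact hdvd j
    obtain ⟨Q', hQ1, hQ2, hQ3⟩ := ih (n - 3) (by omega) (s \ t)
      (by rw [Finset.card_sdiff_of_subset ht_s, htc, hcard]) hdvd'
    refine ⟨insert t Q', ?_, ?_, ?_⟩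
    · intro T hT
      rcases Finset.mem_insert.mp hT with rfl | hT
      · exact ⟨htri, i, htA⟩
      · exact hQ1 T hT
    · rw [Finset.coe_insert,
        (haveI : Std.Symm (fun S T : Finset V => Disjoint S T) := ⟨fun _ _ h => Disjoint.symm h⟩; Set.pairwise_insert_of_symm)]
      refine ⟨hQ2, fun T' hT' _ => ?_⟩
      have hT'sub : T' ⊆ s \ t := by
        rw [← hQ3]
        exact Finset.subset_biUnion_of_mem id (Finset.mem_coe.mp hT')
      rw [Finset.disjoint_left]
      intro x hx hx'
      exact (Finset.mem_sdiff.mp (hT'sub hx')).2 hx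
    · rw [Finset.biUnion_insert, hQ3]
      exact Finset.union_sdiff_of_subset ht_s

/-- Let `G` be the complement of a `k`-partite graph: its vertex set is
partitioned into `k` cliques `A 0, …, A (k-1)`. If `G` has a triangle partition, then it
has a triangle partition `P` in which the number of triangles not entirely contained in
a single class is at most `14 · k³`. -/
theorem stmt15 {V : Type*} [Fintype V] (k : ℕ) (G : SimpleGraph V) (A : Fin k → Set V)
    (hdisj : ∀ i j, i ≠ j → Disjoint (A i) (A j))
    (hunion : (⋃ i, A i) = Set.univ)
    (hclique : ∀ i, G.IsClique (A i))
    (hpart : ∃ P : Finset (Finset V), IsTrianglePartition G P) :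
    ∃ P : Finset (Finset V), IsTrianglePartition G P ∧
      {T | T ∈ P ∧ ¬∃ i : Fin k, (T : Set V) ⊆ A i}.ncard ≤ 14 * k ^ 3 := by
  classical
  obtain ⟨P0, hP0⟩ := hpart
  rcases Nat.eq_zero_or_pos k with hk0 | hkpos
  · subst hk0
    haveI hVe : IsEmpty V := by
      rw [← Set.univ_eq_empty_iff, ← hunion]
      simp
    refine ⟨P0, hP0, ?_⟩
    have hempty : {T | T ∈ P0 ∧ ¬∃ i : Fin 0, (T : Set V) ⊆ A i} = ∅ := by
      ext T
      simp only [Set.mem_setOf_eq, Set.mem_empty_iff_false, iff_false, not_and]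
      intro hT hne
      have h3 := (hP0.1.1 T hT).1
      have hle := Finset.card_le_univ T
      rw [h3, Fintype.card_eq_zero] at hle
      omega
    rw [hempty]
    simp
  · have hclx : ∀ v : V, ∃ i, v ∈ A i := by
      intro v
      have h := Set.mem_univ v
      rw [← hunion] at h
      exact Set.mem_iUnion.mp h
    choose cl hclmem using hclx
    set crossP : Finset V → Prop := fun T => ¬∃ i, (T : Set V) ⊆ A i with hcrossP
    have hex : ∃ n : ℕ, ∃ P : Finset (Finset V),
        IsTrianglePartition G P ∧ (P.filter crossP).card = n := ⟨_, P0, hP0, rfl⟩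
    obtain ⟨P, hP, hPc⟩ := Nat.find_spec hex
    have hmain : (P.filter crossP).card ≤ 2 * k ^ 3 := by
      by_contra hbig
      push_neg at hbig
      set s := P.filter crossP with hs
      have hkey : ∀ {T : Finset V}, T ∈ P → (Multiset.map cl T.1).card = 3 := by
        intro T hT
        rw [Multiset.card_map, ← Finset.card_def]
        exact (hP.1.1 T hT).1
      set f : Finset V → Sym (Fin k) 3 := fun T =>
        if h : (Multiset.map cl T.1).card = 3 then ⟨Multiset.map cl T.1, h⟩
        else Sym.replicate 3 ⟨0, hkpos⟩ with hf
      have hcardSym : (Finset.univ : Finset (Sym (Fin k) 3)).card ≤ k ^ 3 := by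
        rw [Finset.card_univ]
        have hsurj : Function.Surjective
            (fun p : Fin k × Fin k × Fin k =>
              (⟨{p.1, p.2.1, p.2.2}, by simp⟩ : Sym (Fin k) 3)) := by
          intro σ
          obtain ⟨a, b, c, habc⟩ := Multiset.card_eq_three.mp σ.2
          exact ⟨(a, b, c), Subtype.ext habc.symm⟩
        calc Fintype.card (Sym (Fin k) 3)
            ≤ Fintype.card (Fin k × Fin k × Fin k) := Fintype.card_le_of_surjective _ hsurj
          _ = k ^ 3 := by simp; ring
      obtain ⟨σ, -, hσ⟩ := Finset.exists_lt_card_fiber_of_mul_lt_card_of_maps_to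
        (f := f) (t := Finset.univ) (n := 2) (s := s) (fun T _ => Finset.mem_univ _)
        (by
          have h1 : (Finset.univ : Finset (Sym (Fin k) 3)).card * 2 ≤ k ^ 3 * 2 :=
            Nat.mul_le_mul_right 2 hcardSym
          omega)
      obtain ⟨u, hu_sub, hu_card⟩ := Finset.exists_subset_card_eq hσ
      obtain ⟨T1, T2, T3, h12, h13, h23, hu⟩ := Finset.card_eq_three.mp hu_card
      have hmem : ∀ T ∈ ({T1, T2, T3} : Finset (Finset V)), T ∈ P ∧ crossP T ∧ f T = σ := by
        intro T hT
        have hTu : T ∈ u := by rw [hu]; exact hT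
        have hT' := hu_sub hTu
        obtain ⟨hTs, hTf⟩ := Finset.mem_filter.mp hT'
        obtain ⟨hTP, hTc⟩ := Finset.mem_filter.mp hTs
        exact ⟨hTP, hTc, hTf⟩
      have hT1 := hmem T1 (by simp)
      have hT2 := hmem T2 (by simp)
      have hT3 := hmem T3 (by simp)
      have hfval : ∀ {T : Finset V}, T ∈ P → (f T : Multiset (Fin k)) = Multiset.map cl T.1 := by
        intro T hT
        have : f T = ⟨Multiset.map cl T.1, hkey hT⟩ := by
          simp only [hf]
          exact dif_pos (hkey hT)
        rw [this]
        rfl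
      have coe_eq : ∀ {T T' : Finset V}, T ∈ P → T' ∈ P → f T = f T' →
          Multiset.map cl T.1 = Multiset.map cl T'.1 := by
        intro T T' hT hT' h
        rw [← hfval hT, ← hfval hT', h]
      have hm12 := coe_eq hT1.1 hT2.1 (hT1.2.2.trans hT2.2.2.symm)
      have hm13 := coe_eq hT1.1 hT3.1 (hT1.2.2.trans hT3.2.2.symm)
      have hd12 : Disjoint T1 T2 := hP.1.2 (Finset.mem_coe.mpr hT1.1) (Finset.mem_coe.mpr hT2.1) h12
      have hd13 : Disjoint T1 T3 := hP.1.2 (Finset.mem_coe.mpr hT1.1) (Finset.mem_coe.mpr hT3.1) h13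
      have hd23 : Disjoint T2 T3 := hP.1.2 (Finset.mem_coe.mpr hT2.1) (Finset.mem_coe.mpr hT3.1) h23
      set U : Finset V := T1 ∪ T2 ∪ T3 with hU
      have hUdvd : ∀ j, 3 ∣ (U.filter (fun v => cl v = j)).card := by
        intro j
        have hcnt : ∀ T : Finset V,
            (T.filter (fun v => cl v = j)).card = Multiset.count j (Multiset.map cl T.1) := by
          intro T
          rw [Multiset.count_map, Finset.card_def, Finset.filter_val]
          congr 1
          exact Multiset.filter_congr (fun x _ => eq_comm)
        have hdf1 : Disjoint ((T1 ∪ T2).filter (fun v => cl v = j))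
            (T3.filter (fun v => cl v = j)) :=
          Finset.disjoint_filter_filter (by
            rw [Finset.disjoint_union_left]; exact ⟨hd13, hd23⟩)
        have hdf2 : Disjoint (T1.filter (fun v => cl v = j))
            (T2.filter (fun v => cl v = j)) :=
          Finset.disjoint_filter_filter hd12
        rw [hU, Finset.filter_union, Finset.card_union_of_disjoint hdf1,
          Finset.filter_union, Finset.card_union_of_disjoint hdf2,
          hcnt T1, hcnt T2, hcnt T3, ← hm12, ← hm13]
        exact ⟨Multiset.count j (Multiset.map cl T1.1), by ring⟩
      obtain ⟨Q, hQ1, hQ2, hQ3⟩ := monoPartition G A hclique cl hclmem U.card U rfl hUdvd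
      set P' : Finset (Finset V) := (P \ {T1, T2, T3}) ∪ Q with hP'
      have hsubU : ∀ T' ∈ Q, T' ⊆ U := by
        intro T' hT'
        rw [← hQ3]
        exact Finset.subset_biUnion_of_mem id hT'
      have hdisjU : ∀ T ∈ P, T ∉ ({T1, T2, T3} : Finset (Finset V)) → Disjoint T U := by
        intro T hT hTn
        simp only [Finset.mem_insert, Finset.mem_singleton, not_or] at hTn
        rw [hU, Finset.disjoint_union_right, Finset.disjoint_union_right]
        exact ⟨⟨hP.1.2 (Finset.mem_coe.mpr hT) (Finset.mem_coe.mpr hT1.1) hTn.1,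
          hP.1.2 (Finset.mem_coe.mpr hT) (Finset.mem_coe.mpr hT2.1) hTn.2.1⟩,
          hP.1.2 (Finset.mem_coe.mpr hT) (Finset.mem_coe.mpr hT3.1) hTn.2.2⟩
      have hP'part : IsTrianglePartition G P' := by
        refine ⟨⟨?_, ?_⟩, ?_⟩
        · intro T hT
          rcases Finset.mem_union.mp hT with h | h
          · exact hP.1.1 T (Finset.mem_sdiff.mp h).1
          · exact (hQ1 T h).1
        · rw [hP', Finset.coe_union]
          intro x hx y hy hxy
          rcases (Set.mem_union _ _ _).mp hx with hx' | hx' <;>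
            rcases (Set.mem_union _ _ _).mp hy with hy' | hy'
          · exact hP.1.2
              (Finset.mem_coe.mpr (Finset.mem_sdiff.mp (Finset.mem_coe.mp hx')).1)
              (Finset.mem_coe.mpr (Finset.mem_sdiff.mp (Finset.mem_coe.mp hy')).1) hxy
          · exact Disjoint.mono_right (hsubU y (Finset.mem_coe.mp hy'))
              (hdisjU x (Finset.mem_sdiff.mp (Finset.mem_coe.mp hx')).1
                (Finset.mem_sdiff.mp (Finset.mem_coe.mp hx')).2)
          · exact (Disjoint.mono_right (hsubU x (Finset.mem_coe.mp hx'))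
              (hdisjU y (Finset.mem_sdiff.mp (Finset.mem_coe.mp hy')).1
                (Finset.mem_sdiff.mp (Finset.mem_coe.mp hy')).2)).symm
          · exact hQ2 hx' hy' hxy
        · intro v
          by_cases hvU : v ∈ U
          · have hv' : v ∈ Q.biUnion id := by rw [hQ3]; exact hvU
            obtain ⟨T, hTQ, hvT⟩ := Finset.mem_biUnion.mp hv'
            exact ⟨T, Finset.mem_union_right _ hTQ, hvT⟩
          · obtain ⟨T, hTP, hvT⟩ := hP.2 v
            refine ⟨T, Finset.mem_union_left _
              (Finset.mem_sdiff.mpr ⟨hTP, fun hmm => hvU ?_⟩), hvT⟩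
            rw [hU]
            rcases Finset.mem_insert.mp hmm with rfl | hmm
            · exact Finset.mem_union_left _ (Finset.mem_union_left _ hvT)
            · rcases Finset.mem_insert.mp hmm with rfl | hmm
              · exact Finset.mem_union_left _ (Finset.mem_union_right _ hvT)
              · rw [Finset.mem_singleton] at hmm
                subst hmm
                exact Finset.mem_union_right _ hvT
      have hsub3 : ({T1, T2, T3} : Finset (Finset V)) ⊆ s := by
        intro T hT
        have hTu : T ∈ u := by rw [hu]; exact hT
        exact Finset.filter_subset _ s (hu_sub hTu)
      have hcard3 : ({T1, T2, T3} : Finset (Finset V)).card = 3 :=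
        Finset.card_eq_three.mpr ⟨T1, T2, T3, h12, h13, h23, rfl⟩
      have hmle : (P'.filter crossP).card ≤ s.card - 3 := by
        have hss : P'.filter crossP ⊆ s \ {T1, T2, T3} := by
          intro T hT
          obtain ⟨hTm, hTc⟩ := Finset.mem_filter.mp hT
          rcases Finset.mem_union.mp hTm with h | h
          · obtain ⟨hTP, hTn⟩ := Finset.mem_sdiff.mp h
            exact Finset.mem_sdiff.mpr ⟨Finset.mem_filter.mpr ⟨hTP, hTc⟩, hTn⟩
          · exact absurd (hQ1 T h).2 hTc
        calc (P'.filter crossP).card ≤ (s \ {T1, T2, T3}).card := Finset.card_le_card hss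
          _ = s.card - 3 := by rw [Finset.card_sdiff_of_subset hsub3, hcard3]
      have hk3 : 0 < k ^ 3 := pow_pos hkpos 3
      have hlt : (P'.filter crossP).card < Nat.find hex := by
        rw [← hPc]
        omega
      exact Nat.find_min hex hlt ⟨P', hP'part, rfl⟩
    refine ⟨P, hP, ?_⟩
    have hset : {T | T ∈ P ∧ ¬∃ i : Fin k, (T : Set V) ⊆ A i} = ↑(P.filter crossP) := by
      ext T
      simp only [Set.mem_setOf_eq, Finset.coe_filter, hcrossP]
    rw [hset, Set.ncard_coe_finset]
    calc (P.filter crossP).card ≤ 2 * k ^ 3 := hmain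
      _ ≤ 14 * k ^ 3 := Nat.mul_le_mul_right _ (by norm_num)
end
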